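/- For every integer ℓ with 3 ≤ ℓ ≤ 10, the number n consisting of ℓ decimal digits 5 followed by one digit 0 (i.e., n = 10·5·(10^ℓ − 1)/9) is not a value of Euler's totient function: there is no x ≥ 1 with φ(x) = n. -/

import Mathlib

lemma key_totient_lemma (x n : ℕ) (hx : Nat.totient x = n) (h4 : n % 4 = 2)
    (h25 : 25 ∣ n) :
    ∃ p k, Nat.Prime p ∧ p % 4 = 3 ∧ n = p ^ k * (p - 1) := by
  have h5 : (5 : ℕ) ∣ n := dvd_trans ⟨5, rfl⟩ h25
  have hx0 : x ≠ 0 := by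
    rintro rfl
    simp [Nat.totient_zero] at hx
    omega
  set a := x.factorization 2 with ha
  set m := ordCompl[2] x with hmdef
  have hxm : 2 ^ a * m = x := Nat.ordProj_mul_ordCompl_eq_self x 2
  have hcop : Nat.Coprime (2 ^ a) m :=
    Nat.Coprime.pow_left _ (Nat.coprime_ordCompl Nat.prime_two hx0)
  have hm0 : m ≠ 0 := by
    intro h; rw [h, mul_zero] at hxm; exact hx0 hxm.symm
  have hmodd : ¬ 2 ∣ m := Nat.not_dvd_ordCompl Nat.prime_two hx0
  have hphi : Nat.totient (2 ^ a) * Nat.totient m = n := by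
    rw [← Nat.totient_mul hcop, hxm, hx]
  by_cases hm1 : m = 1
  · rw [hm1, Nat.totient_one, mul_one] at hphi
    rcases a with _ | s
    · simp [Nat.totient_one] at hphi; omega
    · rw [Nat.totient_prime_pow_succ Nat.prime_two] at hphi
      simp at hphi
      have : (5 : ℕ) ∣ 2 ^ s := hphi ▸ h5
      have := (Nat.prime_iff.mp (by norm_num)).dvd_of_dvd_pow this
      omega
  have hm3 : 3 ≤ m := by
    rcases m with _ | _ | m
    · exact absurd rfl hm0
    · exact absurd rfl hm1
    · rcases Nat.even_or_odd (m + 2) with he | ho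
      · exact absurd he.two_dvd hmodd
      · omega
  have hem : (2 : ℕ) ∣ Nat.totient m := (Nat.totient_even (by omega)).two_dvd
  have ha1 : a ≤ 1 := by
    by_contra hagt
    push_neg at hagt
    have h2a : (2 : ℕ) ∣ Nat.totient (2 ^ a) := by
      rw [Nat.totient_prime_pow Nat.prime_two (by omega : 0 < a)]
      simp
      omega
    have h4n : (4 : ℕ) ∣ n := by
      rw [← hphi]
      exact mul_dvd_mul h2a hem
    omega
  have hnm : Nat.totient m = n := by
    interval_cases a <;> simpa using hphi
  -- now m is odd, ≥ 3, totient m = n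
  set p := m.minFac with hpdef
  have hp : Nat.Prime p := Nat.minFac_prime hm1
  have hpm : p ∣ m := Nat.minFac_dvd m
  have hp2 : p ≠ 2 := by intro h; rw [h] at hpm; exact hmodd hpm
  have hp3 : 3 ≤ p := by have := hp.two_le; omega
  have hpodd : p % 2 = 1 := Nat.odd_iff.mp (hp.odd_of_ne_two hp2)
  set e := m.factorization p with he
  have he1 : 1 ≤ e := (Nat.Prime.factorization_pos_of_dvd hp hm0 hpm)
  set r := ordCompl[p] m with hr
  have hmr : p ^ e * r = m := Nat.ordProj_mul_ordCompl_eq_self m p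
  have hr0 : r ≠ 0 := by
    intro h; rw [h, mul_zero] at hmr; omega
  have hrdvd : r ∣ m := Dvd.intro_left _ hmr
  by_cases hr1 : r = 1
  · -- m = p ^ e
    rw [hr1, mul_one] at hmr
    have hn : n = p ^ (e - 1) * (p - 1) := by
      rw [← hnm, ← hmr, Nat.totient_prime_pow hp (by omega : 0 < e)]
    have hdp1 : (p - 1) ∣ n := hn ▸ Dvd.intro_left _ rfl
    have h4p : ¬ (4 : ℕ) ∣ (p - 1) := by
      intro h
      have : (4 : ℕ) ∣ n := h.trans hdp1
      omega
    refine ⟨p, e - 1, hp, by omega, hn⟩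
  · -- r has an odd prime factor distinct from p : 4 ∣ n, contradiction
    exfalso
    have hr3 : 3 ≤ r := by
      rcases r with _ | _ | r
      · exact absurd rfl hr0
      · exact absurd rfl hr1
      · rcases Nat.even_or_odd (r + 2) with heven | hodd
        · exact absurd (heven.two_dvd.trans hrdvd) hmodd
        · have := Nat.odd_iff.mp hodd; omega
    have hcopr : Nat.Coprime (p ^ e) r :=
      Nat.Coprime.pow_left _ (Nat.coprime_ordCompl hp hm0)
    have h2pe : (2 : ℕ) ∣ Nat.totient (p ^ e) := by
      rw [Nat.totient_prime_pow hp (by omega : 0 < e)]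
      exact Dvd.dvd.mul_left (by omega : (2:ℕ) ∣ (p - 1)) _
    have h2r : (2 : ℕ) ∣ Nat.totient r := (Nat.totient_even (by omega)).two_dvd
    have h4n : (4 : ℕ) ∣ n := by
      rw [← hnm, ← hmr, Nat.totient_mul hcopr]
      exact mul_dvd_mul h2pe h2r
    omega

theorem repfive_zero_not_totient_value (ℓ : ℕ) (h3 : 3 ≤ ℓ) (h10 : ℓ ≤ 10) :
    ¬ ∃ x : ℕ, 1 ≤ x ∧ Nat.totient x = 10 * 5 * (10 ^ ℓ - 1) / 9 := by
  rintro ⟨x, hx1, hx⟩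
  interval_cases ℓ <;> norm_num at hx
  · -- ℓ = 3, n = 5550
    obtain ⟨p, k, hp, hp4, heq⟩ := key_totient_lemma x 5550 hx (by norm_num) (by norm_num)
    rcases k with _ | k
    · simp only [pow_zero, one_mul] at heq
      have hpn : p = 5551 := by have := hp.two_le; omega
      rw [hpn] at hp
      norm_num at hp
    · have hpdvd : p ∣ 5550 := ⟨p ^ k * (p - 1), by rw [heq]; ring⟩
      have hp5 : p ≠ 5 := by omega
      have hcop5 : Nat.Coprime 25 (p ^ (k + 1)) := by
        have : Nat.Coprime 5 p := (Nat.coprime_primes (by norm_num) hp).mpr (Ne.symm hp5)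
        exact Nat.Coprime.pow 2 (k + 1) this
      have h25p : (25 : ℕ) ∣ (p - 1) :=
        hcop5.dvd_of_dvd_mul_left (heq ▸ (by norm_num : (25:ℕ) ∣ 5550))
      have hpn : p ∣ 2 * (25 * (3 * (37))) := by
        have : (2 * (25 * (3 * (37))) : ℕ) = 5550 := by norm_num
        rw [this]; exact hpdvd
      rcases hp.dvd_mul.mp hpn with h0 | h0
      · have := (Nat.prime_dvd_prime_iff_eq hp (by norm_num)).mp h0
        omega
      rcases hp.dvd_mul.mp h0 with h1 | h1
      · have h5d : p ∣ 5 := hp.dvd_of_dvd_pow (n := 2) (by norm_num [h1])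
        have := (Nat.prime_dvd_prime_iff_eq hp (by norm_num)).mp h5d
        omega
      rcases hp.dvd_mul.mp h1 with h2 | h2
      · have := (Nat.prime_dvd_prime_iff_eq hp (by norm_num)).mp h2
        omega
      have := (Nat.prime_dvd_prime_iff_eq hp (by norm_num)).mp h2
      omega
  · -- ℓ = 4, n = 55550
    obtain ⟨p, k, hp, hp4, heq⟩ := key_totient_lemma x 55550 hx (by norm_num) (by norm_num)
    rcases k with _ | k
    · simp only [pow_zero, one_mul] at heq
      have hpn : p = 55551 := by have := hp.two_le; omega
      rw [hpn] at hp
      norm_num at hp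
    · have hpdvd : p ∣ 55550 := ⟨p ^ k * (p - 1), by rw [heq]; ring⟩
      have hp5 : p ≠ 5 := by omega
      have hcop5 : Nat.Coprime 25 (p ^ (k + 1)) := by
        have : Nat.Coprime 5 p := (Nat.coprime_primes (by norm_num) hp).mpr (Ne.symm hp5)
        exact Nat.Coprime.pow 2 (k + 1) this
      have h25p : (25 : ℕ) ∣ (p - 1) :=
        hcop5.dvd_of_dvd_mul_left (heq ▸ (by norm_num : (25:ℕ) ∣ 55550))
      have hpn : p ∣ 2 * (25 * (11 * (101))) := by
        have : (2 * (25 * (11 * (101))) : ℕ) = 55550 := by norm_num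
        rw [this]; exact hpdvd
      rcases hp.dvd_mul.mp hpn with h0 | h0
      · have := (Nat.prime_dvd_prime_iff_eq hp (by norm_num)).mp h0
        omega
      rcases hp.dvd_mul.mp h0 with h1 | h1
      · have h5d : p ∣ 5 := hp.dvd_of_dvd_pow (n := 2) (by norm_num [h1])
        have := (Nat.prime_dvd_prime_iff_eq hp (by norm_num)).mp h5d
        omega
      rcases hp.dvd_mul.mp h1 with h2 | h2
      · have := (Nat.prime_dvd_prime_iff_eq hp (by norm_num)).mp h2
        omega
      have := (Nat.prime_dvd_prime_iff_eq hp (by norm_num)).mp h2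
      omega
  · -- ℓ = 5, n = 555550
    obtain ⟨p, k, hp, hp4, heq⟩ := key_totient_lemma x 555550 hx (by norm_num) (by norm_num)
    rcases k with _ | k
    · simp only [pow_zero, one_mul] at heq
      have hpn : p = 555551 := by have := hp.two_le; omega
      rw [hpn] at hp
      norm_num at hp
    · have hpdvd : p ∣ 555550 := ⟨p ^ k * (p - 1), by rw [heq]; ring⟩
      have hp5 : p ≠ 5 := by omega
      have hcop5 : Nat.Coprime 25 (p ^ (k + 1)) := by
        have : Nat.Coprime 5 p := (Nat.coprime_primes (by norm_num) hp).mpr (Ne.symm hp5)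
        exact Nat.Coprime.pow 2 (k + 1) this
      have h25p : (25 : ℕ) ∣ (p - 1) :=
        hcop5.dvd_of_dvd_mul_left (heq ▸ (by norm_num : (25:ℕ) ∣ 555550))
      have hpn : p ∣ 2 * (25 * (41 * (271))) := by
        have : (2 * (25 * (41 * (271))) : ℕ) = 555550 := by norm_num
        rw [this]; exact hpdvd
      rcases hp.dvd_mul.mp hpn with h0 | h0
      · have := (Nat.prime_dvd_prime_iff_eq hp (by norm_num)).mp h0
        omega
      rcases hp.dvd_mul.mp h0 with h1 | h1
      · have h5d : p ∣ 5 := hp.dvd_of_dvd_pow (n := 2) (by norm_num [h1])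
        have := (Nat.prime_dvd_prime_iff_eq hp (by norm_num)).mp h5d
        omega
      rcases hp.dvd_mul.mp h1 with h2 | h2
      · have := (Nat.prime_dvd_prime_iff_eq hp (by norm_num)).mp h2
        omega
      have := (Nat.prime_dvd_prime_iff_eq hp (by norm_num)).mp h2
      omega
  · -- ℓ = 6, n = 5555550
    obtain ⟨p, k, hp, hp4, heq⟩ := key_totient_lemma x 5555550 hx (by norm_num) (by norm_num)
    rcases k with _ | k
    · simp only [pow_zero, one_mul] at heq
      have hpn : p = 5555551 := by have := hp.two_le; omega
      rw [hpn] at hp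
      norm_num at hp
    · have hpdvd : p ∣ 5555550 := ⟨p ^ k * (p - 1), by rw [heq]; ring⟩
      have hp5 : p ≠ 5 := by omega
      have hcop5 : Nat.Coprime 25 (p ^ (k + 1)) := by
        have : Nat.Coprime 5 p := (Nat.coprime_primes (by norm_num) hp).mpr (Ne.symm hp5)
        exact Nat.Coprime.pow 2 (k + 1) this
      have h25p : (25 : ℕ) ∣ (p - 1) :=
        hcop5.dvd_of_dvd_mul_left (heq ▸ (by norm_num : (25:ℕ) ∣ 5555550))
      have hpn : p ∣ 2 * (25 * (3 * (7 * (11 * (13 * (37)))))) := by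
        have : (2 * (25 * (3 * (7 * (11 * (13 * (37)))))) : ℕ) = 5555550 := by norm_num
        rw [this]; exact hpdvd
      rcases hp.dvd_mul.mp hpn with h0 | h0
      · have := (Nat.prime_dvd_prime_iff_eq hp (by norm_num)).mp h0
        omega
      rcases hp.dvd_mul.mp h0 with h1 | h1
      · have h5d : p ∣ 5 := hp.dvd_of_dvd_pow (n := 2) (by norm_num [h1])
        have := (Nat.prime_dvd_prime_iff_eq hp (by norm_num)).mp h5d
        omega
      rcases hp.dvd_mul.mp h1 with h2 | h2
      · have := (Nat.prime_dvd_prime_iff_eq hp (by norm_num)).mp h2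
        omega
      rcases hp.dvd_mul.mp h2 with h3 | h3
      · have := (Nat.prime_dvd_prime_iff_eq hp (by norm_num)).mp h3
        omega
      rcases hp.dvd_mul.mp h3 with h4 | h4
      · have := (Nat.prime_dvd_prime_iff_eq hp (by norm_num)).mp h4
        omega
      rcases hp.dvd_mul.mp h4 with h5 | h5
      · have := (Nat.prime_dvd_prime_iff_eq hp (by norm_num)).mp h5
        omega
      have := (Nat.prime_dvd_prime_iff_eq hp (by norm_num)).mp h5
      omega
  · -- ℓ = 7, n = 55555550
    obtain ⟨p, k, hp, hp4, heq⟩ := key_totient_lemma x 55555550 hx (by norm_num) (by norm_num)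
    rcases k with _ | k
    · simp only [pow_zero, one_mul] at heq
      have hpn : p = 55555551 := by have := hp.two_le; omega
      rw [hpn] at hp
      norm_num at hp
    · have hpdvd : p ∣ 55555550 := ⟨p ^ k * (p - 1), by rw [heq]; ring⟩
      have hp5 : p ≠ 5 := by omega
      have hcop5 : Nat.Coprime 25 (p ^ (k + 1)) := by
        have : Nat.Coprime 5 p := (Nat.coprime_primes (by norm_num) hp).mpr (Ne.symm hp5)
        exact Nat.Coprime.pow 2 (k + 1) this
      have h25p : (25 : ℕ) ∣ (p - 1) :=
        hcop5.dvd_of_dvd_mul_left (heq ▸ (by norm_num : (25:ℕ) ∣ 55555550))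
      have hpn : p ∣ 2 * (25 * (239 * (4649))) := by
        have : (2 * (25 * (239 * (4649))) : ℕ) = 55555550 := by norm_num
        rw [this]; exact hpdvd
      rcases hp.dvd_mul.mp hpn with h0 | h0
      · have := (Nat.prime_dvd_prime_iff_eq hp (by norm_num)).mp h0
        omega
      rcases hp.dvd_mul.mp h0 with h1 | h1
      · have h5d : p ∣ 5 := hp.dvd_of_dvd_pow (n := 2) (by norm_num [h1])
        have := (Nat.prime_dvd_prime_iff_eq hp (by norm_num)).mp h5d
        omega
      rcases hp.dvd_mul.mp h1 with h2 | h2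
      · have := (Nat.prime_dvd_prime_iff_eq hp (by norm_num)).mp h2
        omega
      have := (Nat.prime_dvd_prime_iff_eq hp (by norm_num)).mp h2
      omega
  · -- ℓ = 8, n = 555555550
    obtain ⟨p, k, hp, hp4, heq⟩ := key_totient_lemma x 555555550 hx (by norm_num) (by norm_num)
    rcases k with _ | k
    · simp only [pow_zero, one_mul] at heq
      have hpn : p = 555555551 := by have := hp.two_le; omega
      rw [hpn] at hp
      norm_num at hp
    · have hpdvd : p ∣ 555555550 := ⟨p ^ k * (p - 1), by rw [heq]; ring⟩
      have hp5 : p ≠ 5 := by omega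
      have hcop5 : Nat.Coprime 25 (p ^ (k + 1)) := by
        have : Nat.Coprime 5 p := (Nat.coprime_primes (by norm_num) hp).mpr (Ne.symm hp5)
        exact Nat.Coprime.pow 2 (k + 1) this
      have h25p : (25 : ℕ) ∣ (p - 1) :=
        hcop5.dvd_of_dvd_mul_left (heq ▸ (by norm_num : (25:ℕ) ∣ 555555550))
      have hpn : p ∣ 2 * (25 * (11 * (73 * (101 * (137))))) := by
        have : (2 * (25 * (11 * (73 * (101 * (137))))) : ℕ) = 555555550 := by norm_num
        rw [this]; exact hpdvd
      rcases hp.dvd_mul.mp hpn with h0 | h0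
      · have := (Nat.prime_dvd_prime_iff_eq hp (by norm_num)).mp h0
        omega
      rcases hp.dvd_mul.mp h0 with h1 | h1
      · have h5d : p ∣ 5 := hp.dvd_of_dvd_pow (n := 2) (by norm_num [h1])
        have := (Nat.prime_dvd_prime_iff_eq hp (by norm_num)).mp h5d
        omega
      rcases hp.dvd_mul.mp h1 with h2 | h2
      · have := (Nat.prime_dvd_prime_iff_eq hp (by norm_num)).mp h2
        omega
      rcases hp.dvd_mul.mp h2 with h3 | h3
      · have := (Nat.prime_dvd_prime_iff_eq hp (by norm_num)).mp h3
        omega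
      rcases hp.dvd_mul.mp h3 with h4 | h4
      · have := (Nat.prime_dvd_prime_iff_eq hp (by norm_num)).mp h4
        omega
      have := (Nat.prime_dvd_prime_iff_eq hp (by norm_num)).mp h4
      omega
  · -- ℓ = 9, n = 5555555550
    obtain ⟨p, k, hp, hp4, heq⟩ := key_totient_lemma x 5555555550 hx (by norm_num) (by norm_num)
    rcases k with _ | k
    · simp only [pow_zero, one_mul] at heq
      have hpn : p = 5555555551 := by have := hp.two_le; omega
      rw [hpn] at hp
      norm_num at hp
    · have hpdvd : p ∣ 5555555550 := ⟨p ^ k * (p - 1), by rw [heq]; ring⟩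
      have hp5 : p ≠ 5 := by omega
      have hcop5 : Nat.Coprime 25 (p ^ (k + 1)) := by
        have : Nat.Coprime 5 p := (Nat.coprime_primes (by norm_num) hp).mpr (Ne.symm hp5)
        exact Nat.Coprime.pow 2 (k + 1) this
      have h25p : (25 : ℕ) ∣ (p - 1) :=
        hcop5.dvd_of_dvd_mul_left (heq ▸ (by norm_num : (25:ℕ) ∣ 5555555550))
      have hpn : p ∣ 2 * (25 * (3 * (3 * (37 * (333667))))) := by
        have : (2 * (25 * (3 * (3 * (37 * (333667))))) : ℕ) = 5555555550 := by norm_num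
        rw [this]; exact hpdvd
      rcases hp.dvd_mul.mp hpn with h0 | h0
      · have := (Nat.prime_dvd_prime_iff_eq hp (by norm_num)).mp h0
        omega
      rcases hp.dvd_mul.mp h0 with h1 | h1
      · have h5d : p ∣ 5 := hp.dvd_of_dvd_pow (n := 2) (by norm_num [h1])
        have := (Nat.prime_dvd_prime_iff_eq hp (by norm_num)).mp h5d
        omega
      rcases hp.dvd_mul.mp h1 with h2 | h2
      · have := (Nat.prime_dvd_prime_iff_eq hp (by norm_num)).mp h2
        omega
      rcases hp.dvd_mul.mp h2 with h3 | h3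
      · have := (Nat.prime_dvd_prime_iff_eq hp (by norm_num)).mp h3
        omega
      rcases hp.dvd_mul.mp h3 with h4 | h4
      · have := (Nat.prime_dvd_prime_iff_eq hp (by norm_num)).mp h4
        omega
      have := (Nat.prime_dvd_prime_iff_eq hp (by norm_num)).mp h4
      omega
  · -- ℓ = 10, n = 55555555550
    obtain ⟨p, k, hp, hp4, heq⟩ := key_totient_lemma x 55555555550 hx (by norm_num) (by norm_num)
    rcases k with _ | k
    · simp only [pow_zero, one_mul] at heq
      have hpn : p = 55555555551 := by have := hp.two_le; omega
      rw [hpn] at hp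
      norm_num at hp
    · have hpdvd : p ∣ 55555555550 := ⟨p ^ k * (p - 1), by rw [heq]; ring⟩
      have hp5 : p ≠ 5 := by omega
      have hcop5 : Nat.Coprime 25 (p ^ (k + 1)) := by
        have : Nat.Coprime 5 p := (Nat.coprime_primes (by norm_num) hp).mpr (Ne.symm hp5)
        exact Nat.Coprime.pow 2 (k + 1) this
      have h25p : (25 : ℕ) ∣ (p - 1) :=
        hcop5.dvd_of_dvd_mul_left (heq ▸ (by norm_num : (25:ℕ) ∣ 55555555550))
      have hpn : p ∣ 2 * (25 * (11 * (41 * (271 * (9091))))) := by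
        have : (2 * (25 * (11 * (41 * (271 * (9091))))) : ℕ) = 55555555550 := by norm_num
        rw [this]; exact hpdvd
      rcases hp.dvd_mul.mp hpn with h0 | h0
      · have := (Nat.prime_dvd_prime_iff_eq hp (by norm_num)).mp h0
        omega
      rcases hp.dvd_mul.mp h0 with h1 | h1
      · have h5d : p ∣ 5 := hp.dvd_of_dvd_pow (n := 2) (by norm_num [h1])
        have := (Nat.prime_dvd_prime_iff_eq hp (by norm_num)).mp h5d
        omega
      rcases hp.dvd_mul.mp h1 with h2 | h2
      · have := (Nat.prime_dvd_prime_iff_eq hp (by norm_num)).mp h2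
        omega
      rcases hp.dvd_mul.mp h2 with h3 | h3
      · have := (Nat.prime_dvd_prime_iff_eq hp (by norm_num)).mp h3
        omega
      rcases hp.dvd_mul.mp h3 with h4 | h4
      · have := (Nat.prime_dvd_prime_iff_eq hp (by norm_num)).mp h4
        omega
      have := (Nat.prime_dvd_prime_iff_eq hp (by norm_num)).mp h4
      omega
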